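/- Square example: for \(D=(0,1)^2\) and \(u(x,y)=\sin(\pi x)\sin(\pi y)\) (the first Dirichlet eigenfunction with \(\lambda_1=2\pi^2\)), the real part of the Cauchy transform at the corner \(z=0\) satisfies \(\Re(C_D u)(0) = -\frac{1}{\pi}\int_0^1\int_0^1 \frac{x\sin(\pi x)\sin(\pi y)}{x^2+y^2}\,dy\,dx < 0\), whereas \(v_0(0) = -\frac{4}{\lambda_1}\partial_z u(0,0) = 0\); hence \(C_D u \not\equiv v_0\) on the square. -/

import Mathlib

open MeasureTheory

/-- Wirtinger derivative `∂_z = (∂_x - i ∂_y)/2`. -/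
noncomputable def wdz (u : ℂ → ℂ) (z : ℂ) : ℂ :=
  (fderiv ℝ u z 1 - Complex.I * fderiv ℝ u z Complex.I) / 2

/-- The open unit square in `ℂ`. -/
def unitSquare : Set ℂ := {w : ℂ | w.re ∈ Set.Ioo (0 : ℝ) 1 ∧ w.im ∈ Set.Ioo (0 : ℝ) 1}

/-- The first Dirichlet eigenfunction of the unit square, as a complex-valued function. -/
noncomputable def squareEig (w : ℂ) : ℂ :=
  ((Real.sin (Real.pi * w.re) * Real.sin (Real.pi * w.im) : ℝ) : ℂ)

open Set Complex Real

noncomputable def Gfun : ℝ × ℝ → ℝ := fun p =>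
  p.1 * Real.sin (Real.pi * p.1) * Real.sin (Real.pi * p.2) / (p.1 ^ 2 + p.2 ^ 2)

lemma preim_unitSquare :
    (⇑Complex.measurableEquivRealProd.symm) ⁻¹' unitSquare
      = Ioo (0:ℝ) 1 ×ˢ Ioo (0:ℝ) 1 := by
  ext p
  simp [unitSquare, Complex.measurableEquivRealProd_symm_apply, Set.mem_prod, and_assoc]

lemma re_F (w : ℂ) : (squareEig w / (0 - w)).re = -(Gfun (w.re, w.im)) := by
  simp only [squareEig, Gfun, Complex.div_re, Complex.normSq_apply, Complex.sub_re,
    Complex.sub_im, Complex.zero_re, Complex.zero_im, Complex.ofReal_re, Complex.ofReal_im]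
  ring

lemma isOpen_unitSquare : IsOpen unitSquare := by
  have : unitSquare = Complex.re ⁻¹' Ioo 0 1 ∩ Complex.im ⁻¹' Ioo 0 1 := rfl
  rw [this]
  exact (isOpen_Ioo.preimage Complex.continuous_re).inter
    (isOpen_Ioo.preimage Complex.continuous_im)

lemma cont_squareEig : Continuous squareEig := by
  unfold squareEig
  fun_prop

lemma bound_F {w : ℂ} (hw : w ∈ unitSquare) :
    ‖squareEig w / (0 - w)‖ ≤ Real.pi := by
  obtain ⟨⟨hx0, hx1⟩, ⟨hy0, hy1⟩⟩ := hw
  have habs : w.re ≤ ‖w‖ := (le_abs_self _).trans (Complex.abs_re_le_norm w)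
  have hs1 : |Real.sin (Real.pi * w.re)| ≤ Real.pi * w.re := by
    rw [_root_.abs_of_nonneg (Real.sin_nonneg_of_nonneg_of_le_pi (by positivity)
      (by nlinarith [Real.pi_pos]))]
    exact Real.sin_le (by positivity)
  have hs2 : |Real.sin (Real.pi * w.im)| ≤ 1 := Real.abs_sin_le_one _
  have hnum : ‖squareEig w‖ ≤ Real.pi * w.re := by
    rw [squareEig, Complex.norm_real, Real.norm_eq_abs, abs_mul]
    calc |Real.sin (Real.pi * w.re)| * |Real.sin (Real.pi * w.im)|
        ≤ (Real.pi * w.re) * 1 := by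
          apply mul_le_mul hs1 hs2 (abs_nonneg _) (by positivity)
      _ = Real.pi * w.re := mul_one _
  rw [norm_div, zero_sub, norm_neg]
  calc ‖squareEig w‖ / ‖w‖ ≤ (Real.pi * w.re) / w.re := by
        apply div_le_div₀ (by positivity) hnum hx0 habs
    _ = Real.pi := by field_simp
  
lemma hFint : IntegrableOn (fun w => squareEig w / (0 - w)) unitSquare volume := by
  apply Measure.integrableOn_of_bounded (M := Real.pi)
  · apply ne_of_lt
    refine lt_of_le_of_lt (measure_mono (fun w hw => ?_)) (measure_ball_lt_top (x := (0:ℂ)) (r := 2))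
    obtain ⟨⟨hx0, hx1⟩, ⟨hy0, hy1⟩⟩ := hw
    have : ‖w‖ ≤ |w.re| + |w.im| := Complex.norm_le_abs_re_add_abs_im w
    simp only [Metric.mem_ball, Complex.dist_eq, sub_zero]
    rw [abs_of_pos hx0, abs_of_pos hy0] at this
    calc ‖w‖ ≤ w.re + w.im := this
      _ < 2 := by linarith
  · exact (cont_squareEig.measurable.div ((measurable_const.sub measurable_id).comp measurable_id |>.comp measurable_id)).aestronglyMeasurable |>.congr (by
      refine Filter.EventuallyEq.of_eq ?_
      rfl)
  · rw [ae_restrict_iff' isOpen_unitSquare.measurableSet]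
    exact Filter.Eventually.of_forall (fun w hw => bound_F hw)


lemma Gfun_pos {p : ℝ × ℝ} (hp : p ∈ Ioo (0:ℝ) 1 ×ˢ Ioo (0:ℝ) 1) : 0 < Gfun p := by
  obtain ⟨⟨hx0, hx1⟩, ⟨hy0, hy1⟩⟩ := hp
  have h1 : 0 < Real.sin (Real.pi * p.1) :=
    Real.sin_pos_of_pos_of_lt_pi (by positivity) (by nlinarith [Real.pi_pos])
  have h2 : 0 < Real.sin (Real.pi * p.2) :=
    Real.sin_pos_of_pos_of_lt_pi (by positivity) (by nlinarith [Real.pi_pos])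
  have hd : 0 < p.1 ^ 2 + p.2 ^ 2 := by positivity
  exact div_pos (mul_pos (mul_pos hx0 h1) h2) hd

lemma hGint : IntegrableOn Gfun (Ioo (0:ℝ) 1 ×ˢ Ioo (0:ℝ) 1) volume := by
  have h := (((Complex.volume_preserving_equiv_real_prod.symm
      Complex.measurableEquivRealProd).integrableOn_comp_preimage
      (Complex.measurableEquivRealProd.symm.measurableEmbedding)).mpr hFint.re)
  rw [preim_unitSquare] at h
  refine h.neg.congr (Filter.Eventually.of_forall fun p => ?_)
  simpa [Function.comp, RCLike.re_to_complex, Complex.measurableEquivRealProd_symm_apply] using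
    congrArg Neg.neg (re_F (Complex.measurableEquivRealProd.symm p))

lemma prod_eq_iter : ∫ p in Ioo (0:ℝ) 1 ×ˢ Ioo (0:ℝ) 1, Gfun p
    = ∫ x in (0 : ℝ)..1, ∫ y in (0 : ℝ)..1,
        x * Real.sin (Real.pi * x) * Real.sin (Real.pi * y) / (x ^ 2 + y ^ 2) := by
  have hG := hGint
  rw [Measure.volume_eq_prod] at hG ⊢
  rw [setIntegral_prod _ hG]
  simp_rw [intervalIntegral.integral_of_le zero_le_one, integral_Ioc_eq_integral_Ioo]
  rfl

lemma double_pos : 0 < ∫ p in Ioo (0:ℝ) 1 ×ˢ Ioo (0:ℝ) 1, Gfun p := by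
  rw [setIntegral_pos_iff_support_of_nonneg_ae ?_ hGint]
  · refine lt_of_lt_of_le ?_ (measure_mono (fun p hp =>
      (⟨ne_of_gt (Gfun_pos hp), hp⟩ : p ∈ Function.support Gfun ∩ _)))
    rw [Measure.volume_eq_prod, Measure.prod_prod, Real.volume_Ioo]
    simp
  · exact (ae_restrict_iff' (measurableSet_Ioo.prod measurableSet_Ioo)).mpr
      (Filter.Eventually.of_forall fun p hp => (Gfun_pos hp).le)

lemma key_eq : (∫ w in unitSquare, squareEig w / (0 - w)).re
    = -∫ x in (0 : ℝ)..1, ∫ y in (0 : ℝ)..1,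
        x * Real.sin (Real.pi * x) * Real.sin (Real.pi * y) / (x ^ 2 + y ^ 2) := by
  have h1 : (∫ w in unitSquare, squareEig w / (0 - w)).re
      = ∫ w in unitSquare, (squareEig w / (0 - w)).re := by
    have := integral_re (𝕜 := ℂ) hFint
    simpa [RCLike.re_to_complex] using this.symm
  have h2 : ∫ w in unitSquare, (squareEig w / (0 - w)).re
      = ∫ p in Ioo (0:ℝ) 1 ×ˢ Ioo (0:ℝ) 1, -(Gfun p) := by
    have ht := ((Complex.volume_preserving_equiv_real_prod.symm
        Complex.measurableEquivRealProd).setIntegral_preimage_emb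
        (Complex.measurableEquivRealProd.symm.measurableEmbedding)
        (fun w => (squareEig w / (0 - w)).re) unitSquare).symm
    rw [ht, preim_unitSquare]
    refine integral_congr_ae (Filter.Eventually.of_forall fun p => ?_)
    simpa [Complex.measurableEquivRealProd_symm_apply] using
      re_F (Complex.measurableEquivRealProd.symm p)
  rw [h1, h2, integral_neg, prod_eq_iter]



lemma hwdz : wdz squareEig 0 = 0 := by
  have hA : HasFDerivAt (fun w : ℂ => Real.sin (Real.pi * w.re))
      ((Real.cos (Real.pi * (0:ℂ).re) * Real.pi) • (Complex.reCLM : ℂ →L[ℝ] ℝ)) 0 := by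
    have h2 : HasDerivAt (fun t : ℝ => Real.sin (Real.pi * t))
        (Real.cos (Real.pi * (0:ℂ).re) * Real.pi) ((0:ℂ).re) := by
      simpa [Function.comp_def] using (Real.hasDerivAt_sin (Real.pi * (0:ℂ).re)).comp ((0:ℂ).re)
        ((hasDerivAt_id ((0:ℂ).re)).const_mul Real.pi)
    exact h2.comp_hasFDerivAt 0 Complex.reCLM.hasFDerivAt
  have hB : HasFDerivAt (fun w : ℂ => Real.sin (Real.pi * w.im))
      ((Real.cos (Real.pi * (0:ℂ).im) * Real.pi) • (Complex.imCLM : ℂ →L[ℝ] ℝ)) 0 := by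
    have h2 : HasDerivAt (fun t : ℝ => Real.sin (Real.pi * t))
        (Real.cos (Real.pi * (0:ℂ).im) * Real.pi) ((0:ℂ).im) := by
      simpa [Function.comp_def] using (Real.hasDerivAt_sin (Real.pi * (0:ℂ).im)).comp ((0:ℂ).im)
        ((hasDerivAt_id ((0:ℂ).im)).const_mul Real.pi)
    exact h2.comp_hasFDerivAt 0 Complex.imCLM.hasFDerivAt
  have hmul : HasFDerivAt (fun w : ℂ => Real.sin (Real.pi * w.re) * Real.sin (Real.pi * w.im))
      (0 : ℂ →L[ℝ] ℝ) 0 := by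
    have h := hA.mul hB; simp at h; exact h
  have hC : HasFDerivAt squareEig ((Complex.ofRealCLM : ℝ →L[ℝ] ℂ).comp (0 : ℂ →L[ℝ] ℝ)) 0 :=
    Complex.ofRealCLM.hasFDerivAt.comp 0 hmul
  have hfd : fderiv ℝ squareEig 0 = 0 := by
    rw [hC.fderiv, ContinuousLinearMap.comp_zero]
  rw [wdz, hfd]
  simp

theorem stmt19 :
    ((1 / Real.pi : ℂ) * ∫ w in unitSquare, squareEig w / (0 - w)).re
      = -(1 / Real.pi) * ∫ x in (0 : ℝ)..1, ∫ y in (0 : ℝ)..1,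
          x * Real.sin (Real.pi * x) * Real.sin (Real.pi * y) / (x ^ 2 + y ^ 2) ∧
    ((1 / Real.pi : ℂ) * ∫ w in unitSquare, squareEig w / (0 - w)).re < 0 ∧
    wdz squareEig 0 = 0 ∧
    (1 / Real.pi : ℂ) * (∫ w in unitSquare, squareEig w / (0 - w))
      ≠ -(4 / (2 * Real.pi ^ 2) : ℂ) * wdz squareEig 0 := by
  have hcoe : (1 / Real.pi : ℂ) = ((1 / Real.pi : ℝ) : ℂ) := by push_cast; ring
  have hT : 0 < ∫ x in (0 : ℝ)..1, ∫ y in (0 : ℝ)..1,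
      x * Real.sin (Real.pi * x) * Real.sin (Real.pi * y) / (x ^ 2 + y ^ 2) := by
    rw [← prod_eq_iter]; exact double_pos
  have hre : ((1 / Real.pi : ℂ) * ∫ w in unitSquare, squareEig w / (0 - w)).re
      = -(1 / Real.pi) * ∫ x in (0 : ℝ)..1, ∫ y in (0 : ℝ)..1,
          x * Real.sin (Real.pi * x) * Real.sin (Real.pi * y) / (x ^ 2 + y ^ 2) := by
    rw [hcoe, Complex.re_ofReal_mul, key_eq]
    ring
  have hlt : ((1 / Real.pi : ℂ) * ∫ w in unitSquare, squareEig w / (0 - w)).re < 0 := by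
    rw [hre]
    have hπ : 0 < (1 / Real.pi : ℝ) := by positivity
    nlinarith
  refine ⟨hre, hlt, hwdz, ?_⟩
  rw [hwdz, mul_zero]
  intro h
  rw [h] at hlt
  simp at hlt
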